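/- Let A = S/I be a monomial Artinian K-algebra such that the poset M(A) of monomials not in I (ordered by divisibility) has the LYM property. Suppose there is an integer p such that dim_K A_p > dim_K A_k for all k ≠ p. If J is a monomial ideal of A with μ(J) = dim_K A_p, then J = (I + m^p)/I. -/
import Mathlib


open MvPolynomial Pointwise
set_option maxHeartbeats 1000000
set_option synthInstance.maxHeartbeats 100000

/-- The minimal number of generators of an ideal. -/
noncomputable def mu {R : Type*} [CommRing R] (I : Ideal R) : ℕ :=
  sInf {k | ∃ s : Finset R, s.card = k ∧ Ideal.span (s : Set R) = I}

/-- The graded maximal ideal `(x₁, …, xₙ)` of `K[x₁, …, xₙ]`. -/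
noncomputable def mm (K : Type*) [Field K] (n : ℕ) : Ideal (MvPolynomial (Fin n) K) :=
  Ideal.span (Set.range X)

/-- `I` is `m`-full: `mI : y = I` for some `y ∈ m`. -/
def IsMFull {R : Type*} [CommRing R] (m I : Ideal R) : Prop :=
  ∃ y ∈ m, (m * I).colon (Ideal.span {y}) = I

/-- A homogeneous ideal: one containing all homogeneous components of its elements. -/
def IsHomog {K : Type*} [Field K] {n : ℕ} (I : Ideal (MvPolynomial (Fin n) K)) : Prop :=
  ∀ f ∈ I, ∀ k : ℕ, homogeneousComponent k f ∈ I

/-- `dim_K (S/I)_k`, the dimension of the degree `k` part of `S/I`. -/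
noncomputable def hdim (K : Type*) [Field K] (n : ℕ)
    (I : Ideal (MvPolynomial (Fin n) K)) (k : ℕ) : ℕ :=
  Module.finrank K (Submodule.map (Ideal.Quotient.mkₐ K I).toLinearMap
    (homogeneousSubmodule (Fin n) K k))

/-- The total degree of an exponent vector. -/
def mdeg {n : ℕ} (d : Fin n →₀ ℕ) : ℕ := d.sum fun _ e => e

/-- `M_k(S/I)`: the exponent vectors of degree `k` monomials not in `I`. -/
def MSet (K : Type*) [Field K] {n : ℕ} (I : Ideal (MvPolynomial (Fin n) K)) (k : ℕ) :
    Set (Fin n →₀ ℕ) := {d | mdeg d = k ∧ (monomial d (1 : K)) ∉ I}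

/-- `I` is a monomial ideal. -/
def IsMonomialIdeal {K : Type*} [Field K] {n : ℕ} (I : Ideal (MvPolynomial (Fin n) K)) : Prop :=
  ∀ f ∈ I, ∀ d ∈ f.support, (monomial d (1 : K)) ∈ I

/-- The LYM property of the divisibility poset of monomials outside `I`,
ranked by degree.  (Divisibility of monomials is the pointwise order `≤` on
exponent vectors.) -/
def MLYM (K : Type*) [Field K] {n : ℕ} (I : Ideal (MvPolynomial (Fin n) K)) : Prop :=
  ∀ F : Finset (Fin n →₀ ℕ), (∀ d ∈ F, (monomial d (1 : K)) ∉ I) →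
    IsAntichain (· ≤ ·) (F : Set (Fin n →₀ ℕ)) →
    ∑ d ∈ F, (1 : ℚ) / (MSet K I (mdeg d)).ncard ≤ 1

/-- The Sperner property of the Artinian algebra `S/I`:
the maximal number of generators of an ideal of `S/I` equals the maximal
value of the Hilbert function of `S/I`. -/
def SpernerAlg {K : Type*} [Field K] {n : ℕ} (I : Ideal (MvPolynomial (Fin n) K)) : Prop :=
  sSup {m | ∃ J : Ideal (MvPolynomial (Fin n) K ⧸ I), mu J = m}
    = sSup (Set.range (hdim K n I))

section AuxLemmas
variable {K : Type*} [Field K] {n : ℕ}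

lemma mdeg_eq_sum (d : Fin n →₀ ℕ) : mdeg d = ∑ i, d i :=
  Finsupp.sum_fintype _ _ (fun _ => rfl)

lemma mdeg_mono {d e : Fin n →₀ ℕ} (h : d ≤ e) : mdeg d ≤ mdeg e := by
  rw [mdeg_eq_sum, mdeg_eq_sum]
  exact Finset.sum_le_sum fun i _ => h i

lemma mdeg_strict {d e : Fin n →₀ ℕ} (h : d < e) : mdeg d < mdeg e := by
  rw [mdeg_eq_sum, mdeg_eq_sum]
  obtain ⟨i, hi⟩ : ∃ i, d i ≠ e i := by
    by_contra hc
    push_neg at hc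
    exact h.ne (Finsupp.ext hc)
  exact Finset.sum_lt_sum (fun i _ => h.le i) ⟨i, Finset.mem_univ i, lt_of_le_of_ne (h.le i) hi⟩

lemma mdeg_add (d e : Fin n →₀ ℕ) : mdeg (d + e) = mdeg d + mdeg e := by
  simp [mdeg_eq_sum, Finset.sum_add_distrib]

lemma mdeg_single (i : Fin n) (m : ℕ) : mdeg (Finsupp.single i m) = m := by
  simp [mdeg, Finsupp.sum_single_index]

lemma X_mem_mm (i : Fin n) : (X i : MvPolynomial (Fin n) K) ∈ mm K n :=
  Ideal.subset_span ⟨i, rfl⟩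

lemma monomial_mem_mm_pow (p : ℕ) (d : Fin n →₀ ℕ) (hd : p ≤ mdeg d) :
    monomial d (1 : K) ∈ mm K n ^ p := by
  induction p generalizing d with
  | zero => simp
  | succ p ih =>
    have h0 : d ≠ 0 := by
      rintro rfl
      simp [mdeg] at hd
    obtain ⟨i, hi⟩ : ∃ i, d i ≠ 0 := by
      by_contra hc
      push_neg at hc
      exact h0 (Finsupp.ext hc)
    have hle : Finsupp.single i 1 ≤ d := by
      intro j
      rcases eq_or_ne j i with rfl | hj
      · simpa [Finsupp.single_apply] using Nat.one_le_iff_ne_zero.mpr hi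
      · simp [Finsupp.single_apply, hj.symm]
    have heq : monomial d (1 : K) = X i * monomial (d - Finsupp.single i 1) 1 := by
      rw [X, monomial_mul, one_mul, add_tsub_cancel_of_le hle]
    have hdeg : p ≤ mdeg (d - Finsupp.single i 1) := by
      have := mdeg_add (Finsupp.single i 1) (d - Finsupp.single i 1)
      rw [add_tsub_cancel_of_le hle] at this
      rw [mdeg_single] at this
      omega
    rw [heq, pow_succ']
    exact Ideal.mul_mem_mul (X_mem_mm i) (ih _ hdeg)

lemma mem_range_X_pow {p : ℕ} {f : MvPolynomial (Fin n) K}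
    (hf : f ∈ (Set.range (X : Fin n → MvPolynomial (Fin n) K)) ^ p) :
    ∃ d, mdeg d = p ∧ f = monomial d 1 := by
  induction p generalizing f with
  | zero =>
    rw [pow_zero, Set.mem_one] at hf
    exact ⟨0, by simp [mdeg], by simp [hf]⟩
  | succ p ih =>
    rw [pow_succ] at hf
    obtain ⟨a, ha, b, hb, rfl⟩ := hf
    obtain ⟨d, hd, rfl⟩ := ih ha
    obtain ⟨i, rfl⟩ := hb
    refine ⟨d + Finsupp.single i 1, by simp [mdeg_add, mdeg_single, hd], ?_⟩
    show monomial d (1:K) * X i = _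
    rw [X, monomial_mul, mul_one]

lemma mm_pow_le {p : ℕ} {T : Ideal (MvPolynomial (Fin n) K)}
    (h : ∀ d : Fin n →₀ ℕ, mdeg d = p → monomial d (1 : K) ∈ T) : mm K n ^ p ≤ T := by
  rw [mm, Ideal.span, Submodule.span_pow, Submodule.span_le]
  intro f hf
  obtain ⟨d, hd, rfl⟩ := mem_range_X_pow hf
  exact h d hd


variable {I : Ideal (MvPolynomial (Fin n) K)}

lemma mono_inj (hmon : IsMonomialIdeal I) {d e : Fin n →₀ ℕ} (hd : monomial d (1 : K) ∉ I)
    (h : Ideal.Quotient.mk I (monomial d (1 : K)) = Ideal.Quotient.mk I (monomial e 1)) :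
    d = e := by
  by_contra hne
  have hmem : monomial d (1 : K) - monomial e 1 ∈ I := Ideal.Quotient.eq.mp h
  have hds : d ∈ (monomial d (1 : K) - monomial e 1).support := by
    rw [mem_support_iff]
    simp [coeff_monomial, Ne.symm hne]
  exact hd (hmon _ hmem d hds)

lemma mono_indep (hmon : IsMonomialIdeal I) :
    LinearIndependent K (fun d : {d : Fin n →₀ ℕ // monomial d (1 : K) ∉ I} =>
      Ideal.Quotient.mk I (monomial d.1 (1 : K))) := by
  rw [linearIndependent_iff']
  intro s g hsum i hi
  by_contra hgi
  have hmk : Ideal.Quotient.mk I (∑ j ∈ s, monomial j.1 (g j)) = 0 := by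
    rw [map_sum, ← hsum]
    refine Finset.sum_congr rfl fun j _ => ?_
    have : monomial j.1 (g j) = g j • monomial j.1 (1 : K) := by
      rw [smul_monomial, smul_eq_mul, mul_one]
    rw [this]
    exact map_smul (Ideal.Quotient.mkₐ K I) (g j) (monomial j.1 (1 : K))
  rw [Ideal.Quotient.eq_zero_iff_mem] at hmk
  have hcoeff : coeff i.1 (∑ j ∈ s, monomial j.1 (g j)) = g i := by
    rw [coeff_sum]
    rw [Finset.sum_eq_single i]
    · simp [coeff_monomial]
    · intro j hj hji
      have : j.1 ≠ i.1 := fun hh => hji (Subtype.ext hh)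
      simp [coeff_monomial, this]
    · exact fun h => absurd hi h
  exact i.2 (hmon _ hmk i.1 (by rw [mem_support_iff, hcoeff]; exact hgi))

lemma notI_finite (hmon : IsMonomialIdeal I)
    [FiniteDimensional K (MvPolynomial (Fin n) K ⧸ I)] :
    {d : Fin n →₀ ℕ | monomial d (1 : K) ∉ I}.Finite := by
  have h := (mono_indep hmon).finite
  exact Set.finite_coe_iff.mp h

lemma MSet_finite (hmon : IsMonomialIdeal I)
    [FiniteDimensional K (MvPolynomial (Fin n) K ⧸ I)] (k : ℕ) : (MSet K I k).Finite :=
  (notI_finite hmon).subset fun _ hd => hd.2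

lemma hdim_eq (hmon : IsMonomialIdeal I)
    [FiniteDimensional K (MvPolynomial (Fin n) K ⧸ I)] (k : ℕ) :
    hdim K n I k = (MSet K I k).ncard := by
  classical
  set v : (Fin n →₀ ℕ) → (MvPolynomial (Fin n) K ⧸ I) :=
    fun d => Ideal.Quotient.mk I (monomial d (1 : K)) with hv
  have hspan : Submodule.map (Ideal.Quotient.mkₐ K I).toLinearMap
      (homogeneousSubmodule (Fin n) K k) = Submodule.span K (v '' MSet K I k) := by
    apply le_antisymm
    · rintro x ⟨f, hf, rfl⟩
      have hf' : f.IsHomogeneous k := hf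
      have hfs : (Ideal.Quotient.mkₐ K I).toLinearMap f
          = ∑ d ∈ f.support, coeff d f • v d := by
        conv_lhs => rw [f.as_sum]
        rw [map_sum]
        refine Finset.sum_congr rfl fun d _ => ?_
        have : monomial d (coeff d f) = coeff d f • monomial d (1 : K) := by
          rw [smul_monomial, smul_eq_mul, mul_one]
        rw [this, map_smul]
        simp [hv, Ideal.Quotient.mkₐ_eq_mk]
      rw [hfs]
      refine Submodule.sum_mem _ fun d hd => ?_
      by_cases hdI : monomial d (1 : K) ∈ I
      · have : v d = 0 := by
          simpa [hv] using (Ideal.Quotient.eq_zero_iff_mem).mpr hdI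
        simp [this]
      · refine Submodule.smul_mem _ _ (Submodule.subset_span ?_)
        refine ⟨d, ⟨?_, hdI⟩, rfl⟩
        have hw := hf' (mem_support_iff.mp hd)
        rw [show mdeg d = d.degree from rfl, Finsupp.degree_eq_weight_one]
        exact hw
    · rw [Submodule.span_le]
      rintro x ⟨d, hd, rfl⟩
      exact ⟨monomial d 1, isHomogeneous_monomial _ hd.1, rfl⟩
  rw [hdim, hspan]
  have hfin : (MSet K I k).Finite := MSet_finite hmon k
  haveI := hfin.fintype
  have hindep : LinearIndependent K (fun d : MSet K I k => v d.1) := by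
    let incl : MSet K I k → {d : Fin n →₀ ℕ // monomial d (1 : K) ∉ I} :=
      fun d => ⟨d.1, d.2.2⟩
    have hinj : Function.Injective incl := by
      intro a b h
      apply Subtype.ext
      exact congrArg (fun x : {d : Fin n →₀ ℕ // monomial d (1 : K) ∉ I} => x.val) h
    exact (mono_indep hmon).comp incl hinj
  have hrange : v '' MSet K I k = Set.range (fun d : MSet K I k => v d.1) :=
    Set.image_eq_range v (MSet K I k)
  rw [hrange, finrank_span_eq_card hindep]
  rw [← Nat.card_coe_set_eq, Nat.card_eq_fintype_card]

end AuxLemmas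

/-- Let `A = S/I` be a monomial Artinian algebra whose monomial poset has the
LYM property, and let `p` be the unique degree where the Hilbert function is
maximal.  If `J` is a monomial ideal of `A` with `μ(J) = dim_K A_p`, then
`J = (I + m^p)/I`. -/
theorem stmt4 {K : Type*} [Field K] {n : ℕ} (I : Ideal (MvPolynomial (Fin n) K))
    (hmon : IsMonomialIdeal I) [FiniteDimensional K (MvPolynomial (Fin n) K ⧸ I)]
    (hLYM : MLYM K I)
    (p : ℕ) (hp : ∀ k : ℕ, k ≠ p → hdim K n I k < hdim K n I p)
    (J : Ideal (MvPolynomial (Fin n) K)) (hIJ : I ≤ J) (hJmon : IsMonomialIdeal J)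
    (hmu : mu (J.map (Ideal.Quotient.mk I)) = hdim K n I p) :
    J.map (Ideal.Quotient.mk I) = (I + mm K n ^ p).map (Ideal.Quotient.mk I) := by
  classical
  set T : Set (Fin n →₀ ℕ) :=
    {d | monomial d (1 : K) ∈ J ∧ monomial d (1 : K) ∉ I} with hT
  set G : Set (Fin n →₀ ℕ) := {d | d ∈ T ∧ ∀ e, e < d → e ∉ T} with hG
  have hGsubT : G ⊆ T := fun d hd => hd.1
  have hmin : ∀ N (d : Fin n →₀ ℕ), mdeg d ≤ N → d ∈ T → ∃ g ∈ G, g ≤ d := by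
    intro N
    induction N with
    | zero =>
      intro d hd hdT
      exact ⟨d, ⟨hdT, fun e he heT => absurd (mdeg_strict he) (by omega)⟩, le_rfl⟩
    | succ N ih =>
      intro d hd hdT
      by_cases hc : ∀ e, e < d → e ∉ T
      · exact ⟨d, ⟨hdT, hc⟩, le_rfl⟩
      · push_neg at hc
        obtain ⟨e, hed, heT⟩ := hc
        have h1 : mdeg e ≤ N := by have := mdeg_strict hed; omega
        obtain ⟨g, hg, hge⟩ := ih e h1 heT
        exact ⟨g, hg, hge.trans hed.le⟩
  have hGfin : G.Finite := (notI_finite hmon).subset (fun d hd => (hGsubT hd).2)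
  set F : Finset (Fin n →₀ ℕ) := hGfin.toFinset with hF
  have hFG : (F : Set (Fin n →₀ ℕ)) = G := hGfin.coe_toFinset
  have hanti : IsAntichain (· ≤ ·) G := by
    intro a ha b hb hne hab
    exact hb.2 a (lt_of_le_of_ne hab hne) ha.1
  have hspan : Ideal.span ((fun d => Ideal.Quotient.mk I (monomial d (1 : K))) '' G)
      = J.map (Ideal.Quotient.mk I) := by
    apply le_antisymm
    · rw [Ideal.span_le]
      rintro x ⟨d, hd, rfl⟩
      exact Ideal.mem_map_of_mem _ (hGsubT hd).1
    · rw [Ideal.map_le_iff_le_comap]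
      intro f hf
      rw [Ideal.mem_comap]
      have hfs : Ideal.Quotient.mk I f
          = ∑ v ∈ f.support, Ideal.Quotient.mk I (monomial v (coeff v f)) := by
        conv_lhs => rw [f.as_sum]
        rw [map_sum]
      rw [hfs]
      refine Ideal.sum_mem _ fun v hv => ?_
      by_cases hvI : monomial v (1 : K) ∈ I
      · have hvc : monomial v (coeff v f) ∈ I := by
          have h2 : C (coeff v f) * monomial v (1 : K) ∈ I := Ideal.mul_mem_left _ _ hvI
          rwa [C_mul_monomial, mul_one] at h2
        rw [Ideal.Quotient.eq_zero_iff_mem.mpr hvc]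
        exact zero_mem _
      · have hvT : v ∈ T := ⟨hJmon f hf v hv, hvI⟩
        obtain ⟨g, hgG, hgv⟩ := hmin (mdeg v) v le_rfl hvT
        have hsplit : monomial v (coeff v f)
            = monomial (v - g) (coeff v f) * monomial g (1 : K) := by
          rw [monomial_mul, mul_one, tsub_add_cancel_of_le hgv]
        rw [hsplit, map_mul]
        exact Ideal.mul_mem_left _ _ (Ideal.subset_span ⟨g, hgG, rfl⟩)
  have hinjG : Set.InjOn (fun d => Ideal.Quotient.mk I (monomial d (1 : K))) G :=
    fun a haG b hbG h => mono_inj hmon (hGsubT haG).2 h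
  have hcardle : mu (J.map (Ideal.Quotient.mk I)) ≤ F.card := by
    apply Nat.sInf_le
    refine ⟨F.image (fun d => Ideal.Quotient.mk I (monomial d (1 : K))), ?_, ?_⟩
    · apply Finset.card_image_of_injOn
      rwa [hFG]
    · rw [Finset.coe_image, hFG, hspan]
  have hdp_pos : 0 < hdim K n I p := lt_of_le_of_lt (Nat.zero_le _) (hp (p + 1) (by omega))
  have hMcard : ∀ k, (MSet K I k).ncard = hdim K n I k := fun k => (hdim_eq hmon k).symm
  have hFnotI : ∀ d ∈ F, monomial d (1 : K) ∉ I :=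
    fun d hd => (hGsubT (hGfin.mem_toFinset.mp hd)).2
  have hly := hLYM F hFnotI (by rw [hFG]; exact hanti)
  have hterm_pos : ∀ d ∈ F, 0 < ((MSet K I (mdeg d)).ncard : ℚ) := by
    intro d hd
    have hne : d ∈ MSet K I (mdeg d) := ⟨rfl, hFnotI d hd⟩
    have := (Set.ncard_pos (MSet_finite hmon _)).mpr ⟨d, hne⟩
    exact_mod_cast this
  have hbound : ∀ d ∈ F, (1 : ℚ) / (hdim K n I p) ≤ 1 / ((MSet K I (mdeg d)).ncard) := by
    intro d hd
    apply one_div_le_one_div_of_le (hterm_pos d hd)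
    rw [hMcard]
    by_cases h : mdeg d = p
    · rw [h]
    · exact_mod_cast (hp _ h).le
  have hFle : F.card ≤ hdim K n I p := by
    have hsum_ge : (F.card : ℚ) / (hdim K n I p)
        ≤ ∑ d ∈ F, (1 : ℚ) / (MSet K I (mdeg d)).ncard := by
      calc (F.card : ℚ) / (hdim K n I p) = ∑ _d ∈ F, (1 : ℚ) / (hdim K n I p) := by
            rw [Finset.sum_const, nsmul_eq_mul]; ring
        _ ≤ _ := Finset.sum_le_sum hbound
    have h1 := hsum_ge.trans hly
    rw [div_le_one (by exact_mod_cast hdp_pos)] at h1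
    exact_mod_cast h1
  have hFcard : F.card = hdim K n I p :=
    le_antisymm hFle (hmu ▸ hcardle)
  have hall : ∀ d ∈ F, mdeg d = p := by
    intro d hd
    by_contra hne
    have hstrict : (1 : ℚ) / (hdim K n I p) < 1 / ((MSet K I (mdeg d)).ncard) := by
      apply one_div_lt_one_div_of_lt (hterm_pos d hd)
      rw [hMcard]
      exact_mod_cast hp _ hne
    have hlt : (1 : ℚ) < ∑ d ∈ F, 1 / ((MSet K I (mdeg d)).ncard : ℚ) := by
      have h2 := Finset.sum_lt_sum hbound ⟨d, hd, hstrict⟩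
      calc (1 : ℚ) = ∑ _e ∈ F, (1 : ℚ) / (hdim K n I p) := by
            rw [Finset.sum_const, nsmul_eq_mul, hFcard]
            field_simp
        _ < _ := h2
    exact absurd hly (not_le.mpr hlt)
  have hGM : G ⊆ MSet K I p := fun d hdG =>
    ⟨hall d (hGfin.mem_toFinset.mpr hdG), (hGsubT hdG).2⟩
  have hGeq : G = MSet K I p := by
    apply Set.eq_of_subset_of_ncard_le hGM _ (MSet_finite hmon p)
    rw [hMcard, ← hFcard, Set.ncard_eq_toFinset_card _ hGfin]
  have hMp_J : ∀ d : Fin n →₀ ℕ, mdeg d = p → monomial d (1 : K) ∈ J := by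
    intro d hd
    by_cases hdI : monomial d (1 : K) ∈ I
    · exact hIJ hdI
    · have hdG : d ∈ G := hGeq ▸ (⟨hd, hdI⟩ : d ∈ MSet K I p)
      exact (hGsubT hdG).1
  have hJeq : J = I + mm K n ^ p := by
    apply le_antisymm
    · intro f hf
      rw [Submodule.add_eq_sup]
      have hfs : f = ∑ v ∈ f.support, monomial v (coeff v f) := f.as_sum
      rw [hfs]
      refine Ideal.sum_mem _ fun v hv => ?_
      by_cases hvI : monomial v (1 : K) ∈ I
      · have hvc : monomial v (coeff v f) ∈ I := by
          have h2 : C (coeff v f) * monomial v (1 : K) ∈ I := Ideal.mul_mem_left _ _ hvI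
          rwa [C_mul_monomial, mul_one] at h2
        exact Submodule.mem_sup_left hvc
      · have hvT : v ∈ T := ⟨hJmon f hf v hv, hvI⟩
        obtain ⟨g, hgG, hgv⟩ := hmin (mdeg v) v le_rfl hvT
        have hgp : mdeg g = p := (hGM hgG).1
        have hple : p ≤ mdeg v := hgp ▸ mdeg_mono hgv
        have hvm : monomial v (coeff v f) ∈ mm K n ^ p := by
          have h2 : C (coeff v f) * monomial v (1 : K) ∈ mm K n ^ p :=
            Ideal.mul_mem_left _ _ (monomial_mem_mm_pow p v hple)
          rwa [C_mul_monomial, mul_one] at h2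
        exact Submodule.mem_sup_right hvm
    · rw [Submodule.add_eq_sup]
      exact sup_le hIJ (mm_pow_le hMp_J)
  rw [hJeq]
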